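/- Let T be a bounded linear operator on a complex Hilbert space H and let f, g ∈ H with T*g = 0. Then for every positive integer n, (T + f⊗g)^n = T^n + ∑_{j=0}^{n−1} ⟨f,g⟩^{n−j−1} (T^j f) ⊗ g. -/
import Mathlib


open scoped InnerProductSpace

/-- The rank one operator `f ⊗ g` given by `(f ⊗ g) h = ⟨h, g⟩ f`, where the inner
product is linear in the first argument (i.e. `⟪g, h⟫_ℂ • f` in Mathlib's convention). -/
noncomputable def rankOne {H : Type*} [NormedAddCommGroup H] [InnerProductSpace ℂ H]
    (f g : H) : H →L[ℂ] H := (innerSL ℂ g).smulRight f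

/-- The left spectrum of a bounded operator. -/
def leftSpectrum {H : Type*} [NormedAddCommGroup H] [InnerProductSpace ℂ H]
    (T : H →L[ℂ] H) : Set ℂ :=
  {l : ℂ | ¬ ∃ L : H →L[ℂ] H, L ∘L (T - l • (1 : H →L[ℂ] H)) = 1}

/-- The point spectrum (set of eigenvalues) of a bounded operator. -/
def pointSpectrum {H : Type*} [NormedAddCommGroup H] [InnerProductSpace ℂ H]
    (T : H →L[ℂ] H) : Set ℂ :=
  {l : ℂ | ∃ h : H, h ≠ 0 ∧ T h = l • h}

lemma rankOne_apply {H : Type*} [NormedAddCommGroup H] [InnerProductSpace ℂ H]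
    (f g h : H) : rankOne f g h = ⟪g, h⟫_ℂ • f := rfl

lemma comp_rankOne {H : Type*} [NormedAddCommGroup H] [InnerProductSpace ℂ H]
    (T : H →L[ℂ] H) (f g : H) : T ∘L rankOne f g = rankOne (T f) g := by
  ext h; simp [rankOne_apply]

lemma rankOne_comp_eq_zero {H : Type*} [NormedAddCommGroup H] [InnerProductSpace ℂ H]
    [CompleteSpace H] (T : H →L[ℂ] H) (f g : H)
    (hg : ContinuousLinearMap.adjoint T g = 0) : rankOne f g ∘L T = 0 := by
  ext h
  simp only [ContinuousLinearMap.comp_apply, rankOne_apply,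
    ContinuousLinearMap.zero_apply]
  rw [← ContinuousLinearMap.adjoint_inner_left, hg, inner_zero_left, zero_smul]

lemma rankOne_comp_rankOne {H : Type*} [NormedAddCommGroup H] [InnerProductSpace ℂ H]
    (a f g : H) : rankOne a g ∘L rankOne f g = ⟪g, f⟫_ℂ • rankOne a g := by
  ext h
  simp [rankOne_apply, smul_smul, mul_comm]

theorem rankOne_perturbation_pow
    {H : Type*} [NormedAddCommGroup H] [InnerProductSpace ℂ H] [CompleteSpace H]
    (T : H →L[ℂ] H) (f g : H) (hg : ContinuousLinearMap.adjoint T g = 0)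
    (n : ℕ) (hn : 0 < n) :
    (T + rankOne f g) ^ n =
      T ^ n + ∑ j ∈ Finset.range n, ⟪g, f⟫_ℂ ^ (n - j - 1) • rankOne ((T ^ j) f) g := by
  induction n with
  | zero => exact absurd hn (lt_irrefl 0)
  | succ n ih =>
    rcases Nat.eq_zero_or_pos n with h0 | hpos
    · subst h0
      simp [rankOne]
    · rw [pow_succ, ih hpos]
      have key : ∀ m : ℕ,
          (T ^ n + ∑ j ∈ Finset.range n, ⟪g, f⟫_ℂ ^ (n - j - 1) • rankOne ((T ^ j) f) g)
            * (T + rankOne f g)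
          = T ^ (n + 1) +
            ∑ j ∈ Finset.range (n + 1), ⟪g, f⟫_ℂ ^ (n + 1 - j - 1) • rankOne ((T ^ j) f) g := by
        intro _
        have hmul : ∀ A B : H →L[ℂ] H, A * B = A ∘L B := fun _ _ => rfl
        have h1 : T ^ n * rankOne f g = rankOne ((T ^ n) f) g := by
          rw [hmul, comp_rankOne]
        have h2 : ∀ j ∈ Finset.range n,
            (⟪g, f⟫_ℂ ^ (n - j - 1) • rankOne ((T ^ j) f) g) * (T + rankOne f g)
            = ⟪g, f⟫_ℂ ^ (n + 1 - j - 1) • rankOne ((T ^ j) f) g := by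
          intro j hj
          have hj' : j < n := Finset.mem_range.mp hj
          have he : n + 1 - j - 1 = (n - j - 1) + 1 := by omega
          rw [mul_add, hmul, hmul, ContinuousLinearMap.smul_comp,
            ContinuousLinearMap.smul_comp, rankOne_comp_eq_zero _ _ _ hg,
            rankOne_comp_rankOne, smul_zero, zero_add, smul_smul, ← pow_succ, he]
        rw [add_mul, Finset.sum_mul, Finset.sum_congr rfl h2, mul_add, h1, ← pow_succ,
          Finset.sum_range_succ]
        have hlast : ⟪g, f⟫_ℂ ^ (n + 1 - n - 1) • rankOne ((T ^ n) f) g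
            = rankOne ((T ^ n) f) g := by simp
        rw [hlast]
        abel
      exact key 0
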